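/- Let Q be an n×n subpermutation matrix and let A be any n×n matrix over a field F. If for every i, j ∈ [n] the rank of the lower-left i×j submatrix of A equals that of Q, then the (n-i+1, j) entry of Q equals r^{i,j}(A) - r^{i-1,j}(A) - r^{i,j-1}(A) + r^{i-1,j-1}(A), where r^{i,j}(A) denotes the rank of the lower-left i×j submatrix of A (with r^{0,j} = r^{i,0} = 0). -/

import Mathlib

/-- Rank of the lower-left i×j submatrix of A (rows {n-i+1,...,n}, columns {1,...,j},
one-indexed), with `r^{0,j} = r^{i,0} = 0`. -/
noncomputable def llrank {F : Type*} [Field F] {n : ℕ}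
    (A : Matrix (Fin n) (Fin n) F) (i j : ℕ) : ℕ :=
  (Matrix.of fun (a : Fin (min i n)) (b : Fin (min j n)) =>
    A ⟨n - min i n + a.1, by have := a.2; omega⟩ ⟨b.1, by have := b.2; omega⟩).rank

open Finset in
open scoped Classical in
private lemma rank_subperm {F : Type*} [Field F] {m k : ℕ} (M : Matrix (Fin m) (Fin k) F)
    (h01 : ∀ a b, M a b = 0 ∨ M a b = 1)
    (hrow : ∀ a b b', M a b ≠ 0 → M a b' ≠ 0 → b = b')
    (hcol : ∀ a a' b, M a b ≠ 0 → M a' b ≠ 0 → a = a') :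
    M.rank = (Finset.univ.filter (fun p : Fin m × Fin k => M p.1 p.2 ≠ 0)).card := by
  classical
  set D : Finset (Fin m) := Finset.univ.filter (fun a => ∃ b, M a b ≠ 0) with hD
  have hcex : ∀ a : D, ∃ b, M a.1 b ≠ 0 := fun a => (Finset.mem_filter.mp a.2).2
  choose c hcne using hcex
  have hrowval : ∀ a : D, M a.1 = Pi.single (c a) 1 := by
    intro a; funext b
    by_cases hb : b = c a
    · rcases h01 a.1 (c a) with h | h
      · exact absurd h (hcne a)
      · rw [hb]; simp [h]
    · have h0 : M a.1 b = 0 := by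
        by_contra hb0
        exact hb (hrow a.1 b (c a) hb0 (hcne a))
      simp [h0, Pi.single_eq_of_ne hb]
  have cinj : Function.Injective c := by
    intro a a' h
    exact Subtype.ext (hcol a.1 a'.1 (c a) (hcne a) (h ▸ hcne a'))
  have hli : LinearIndependent F (fun a : D => M a.1) := by
    have hli' : LinearIndependent F (fun a : D => (Pi.basisFun F (Fin k)) (c a)) :=
      (Pi.basisFun F (Fin k)).linearIndependent.comp c cinj
    have heq : (fun a : D => M a.1) = fun a : D => Pi.single (c a) (1 : F) := funext hrowval
    rw [heq]
    simpa [Pi.basisFun_apply] using hli'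
  have hspan : Submodule.span F (Set.range M) =
      Submodule.span F (Set.range (fun a : D => M a.1)) := by
    apply le_antisymm
    · rw [Submodule.span_le]
      rintro _ ⟨a, rfl⟩
      by_cases ha : ∃ b, M a b ≠ 0
      · exact Submodule.subset_span ⟨⟨a, Finset.mem_filter.mpr ⟨Finset.mem_univ a, ha⟩⟩, rfl⟩
      · push_neg at ha
        have hM0 : M a = 0 := funext fun b => ha b
        rw [hM0]
        exact Submodule.zero_mem _
    · exact Submodule.span_mono (by rintro _ ⟨a, rfl⟩; exact ⟨a.1, rfl⟩)
  rw [Matrix.rank_eq_finrank_span_row, show M.row = M from rfl, hspan, finrank_span_eq_card hli, Fintype.card_coe]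
  refine (Finset.card_bij (fun (p : Fin m × Fin k) _ => p.1) ?_ ?_ ?_).symm
  · intro p hp
    rw [Finset.mem_filter] at hp
    exact Finset.mem_filter.mpr ⟨Finset.mem_univ _, ⟨p.2, hp.2⟩⟩
  · intro p hp q hq h
    rw [Finset.mem_filter] at hp hq
    have h2 : p.2 = q.2 := hrow p.1 p.2 q.2 hp.2 (by rw [h]; exact hq.2)
    exact Prod.ext h h2
  · intro a ha
    rw [hD, Finset.mem_filter] at ha
    obtain ⟨b, hb⟩ := ha.2
    exact ⟨(a, b), Finset.mem_filter.mpr ⟨Finset.mem_univ _, hb⟩, rfl⟩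


open scoped Classical in
noncomputable def llcount {F : Type*} [Field F] {n : ℕ}
    (Q : Matrix (Fin n) (Fin n) F) (i j : ℕ) : ℕ :=
  (Finset.univ.filter
    (fun p : Fin n × Fin n => n - i ≤ p.1.1 ∧ p.2.1 < j ∧ Q p.1 p.2 ≠ 0)).card

open scoped Classical in
private lemma llrank_eq_count {F : Type*} [Field F] {n : ℕ}
    (Q : Matrix (Fin n) (Fin n) F)
    (hQ01 : ∀ i j : Fin n, Q i j = 0 ∨ Q i j = 1)
    (hQrow : ∀ i j k : Fin n, Q i j ≠ 0 → Q i k ≠ 0 → j = k)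
    (hQcol : ∀ i j k : Fin n, Q i j ≠ 0 → Q k j ≠ 0 → i = k)
    {i j : ℕ} (hin : i ≤ n) (hjn : j ≤ n) :
    llrank Q i j = llcount Q i j := by
  rw [llrank, rank_subperm]
  · rw [llcount]
    refine Finset.card_bij
      (fun (p : Fin (min i n) × Fin (min j n)) _ =>
        ((⟨n - min i n + p.1.1, by have := p.1.2; omega⟩ : Fin n),
         (⟨p.2.1, by have := p.2.2; omega⟩ : Fin n))) ?_ ?_ ?_
    · intro p hp
      rw [Finset.mem_filter] at hp ⊢
      dsimp only
      refine ⟨Finset.mem_univ _, by have := p.1.2; omega, by have := p.2.2; omega, hp.2⟩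
    · intro p hp q hq h
      simp only [Prod.mk.injEq, Fin.mk.injEq] at h
      have h1 : p.1 = q.1 := Fin.ext (by omega)
      have h2 : p.2 = q.2 := Fin.ext h.2
      exact Prod.ext h1 h2
    · intro b hb
      rw [Finset.mem_filter] at hb
      obtain ⟨-, h1, h2, h3⟩ := hb
      have hr : b.1.1 < n := b.1.2
      have hc : b.2.1 < n := b.2.2
      refine ⟨(⟨b.1.1 - (n - min i n), by omega⟩, ⟨b.2.1, by omega⟩),
        Finset.mem_filter.mpr ⟨Finset.mem_univ _, ?_⟩, ?_⟩
      · dsimp only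
        rw [Matrix.of_apply]
        convert h3 using 2
        exact Fin.ext (by simp; omega)
      · dsimp only
        exact Prod.ext (Fin.ext (by simp; omega)) (Fin.ext rfl)
  · intro a b
    exact hQ01 _ _
  · intro a b b' h h'
    have := hQrow _ _ _ h h'
    exact Fin.ext (by simpa [Fin.ext_iff] using this)
  · intro a a' b h h'
    have := hQcol _ _ _ h h'
    have h2 : n - min i n + a.1 = n - min i n + a'.1 := by simpa [Fin.ext_iff] using this
    exact Fin.ext (by omega)

private lemma llrank_zero_left {F : Type*} [Field F] {n : ℕ}
    (B : Matrix (Fin n) (Fin n) F) (j : ℕ) : llrank B 0 j = 0 := by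
  have h := Matrix.rank_le_card_height (Matrix.of fun (a : Fin (min 0 n)) (b : Fin (min j n)) =>
    B ⟨n - min 0 n + a.1, by have := a.2; omega⟩ ⟨b.1, by have := b.2; omega⟩)
  simpa [llrank] using h

private lemma llrank_zero_right {F : Type*} [Field F] {n : ℕ}
    (B : Matrix (Fin n) (Fin n) F) (i : ℕ) : llrank B i 0 = 0 := by
  have h := Matrix.rank_le_card_width (Matrix.of fun (a : Fin (min i n)) (b : Fin (min 0 n)) =>
    B ⟨n - min i n + a.1, by have := a.2; omega⟩ ⟨b.1, by have := b.2; omega⟩)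
  simpa [llrank] using h

open scoped Classical in
private lemma llcount_ie {F : Type*} [Field F] {n : ℕ} (Q : Matrix (Fin n) (Fin n) F)
    {i j : ℕ} (hi1 : 1 ≤ i) (hin : i ≤ n) (hj1 : 1 ≤ j) (hjn : j ≤ n) :
    (llcount Q i j : ℤ) - llcount Q (i-1) j - llcount Q i (j-1) + llcount Q (i-1) (j-1)
      = if Q ⟨n - i, Nat.sub_lt_of_pos_le hi1 hin⟩ ⟨j - 1, Nat.sub_one_lt_of_le hj1 hjn⟩ = 0 then 0 else 1 := by
  simp only [llcount, Finset.card_filter]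
  push_cast
  rw [← Finset.sum_sub_distrib, ← Finset.sum_sub_distrib, ← Finset.sum_add_distrib]
  have hpt : ∀ p : Fin n × Fin n,
      ((if n - i ≤ p.1.1 ∧ p.2.1 < j ∧ Q p.1 p.2 ≠ 0 then (1:ℤ) else 0)
        - (if n - (i-1) ≤ p.1.1 ∧ p.2.1 < j ∧ Q p.1 p.2 ≠ 0 then (1:ℤ) else 0)
        - (if n - i ≤ p.1.1 ∧ p.2.1 < j-1 ∧ Q p.1 p.2 ≠ 0 then (1:ℤ) else 0)
        + (if n - (i-1) ≤ p.1.1 ∧ p.2.1 < j-1 ∧ Q p.1 p.2 ≠ 0 then (1:ℤ) else 0))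
      = if p = ((⟨n - i, by omega⟩ : Fin n), (⟨j - 1, by omega⟩ : Fin n)) then
          (if Q p.1 p.2 = 0 then 0 else (1:ℤ)) else 0 := by
    rintro ⟨⟨r, hr⟩, ⟨c, hc⟩⟩
    by_cases hq : Q ⟨r, hr⟩ ⟨c, hc⟩ = 0
    · simp [hq]
    · simp only [hq, ne_eq, not_false_eq_true, and_true, Prod.mk.injEq, Fin.mk.injEq]
      split_ifs <;> first | omega | contradiction
  rw [Finset.sum_congr rfl (fun p _ => hpt p), Finset.sum_ite_eq' Finset.univ]
  simp

/-- the entries of a subpermutation matrix Q with the same lower-left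
ranks as A are given by the second differences of the rank function of A. -/
theorem subpermutation_entry_eq_rank_difference {F : Type*} [Field F] {n : ℕ}
    (Q A : Matrix (Fin n) (Fin n) F)
    (hQ01 : ∀ i j : Fin n, Q i j = 0 ∨ Q i j = 1)
    (hQrow : ∀ i j k : Fin n, Q i j ≠ 0 → Q i k ≠ 0 → j = k)
    (hQcol : ∀ i j k : Fin n, Q i j ≠ 0 → Q k j ≠ 0 → i = k)
    (hrank : ∀ i j : ℕ, 1 ≤ i → i ≤ n → 1 ≤ j → j ≤ n → llrank A i j = llrank Q i j) :
    ∀ i j : ℕ, ∀ hi1 : 1 ≤ i, ∀ hin : i ≤ n, ∀ hj1 : 1 ≤ j, ∀ hjn : j ≤ n,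
      Q ⟨n - i, by omega⟩ ⟨j - 1, by omega⟩ =
        (((llrank A i j : ℤ) - (llrank A (i-1) j : ℤ) - (llrank A i (j-1) : ℤ)
          + (llrank A (i-1) (j-1) : ℤ) : ℤ) : F) := by
  intro i j hi1 hin hj1 hjn
  have key : ∀ i' j', i' ≤ n → j' ≤ n → llrank A i' j' = llrank Q i' j' := by
    intro i' j' h1 h2
    rcases Nat.eq_zero_or_pos i' with rfl | hi'
    · rw [llrank_zero_left, llrank_zero_left]
    rcases Nat.eq_zero_or_pos j' with rfl | hj'
    · rw [llrank_zero_right, llrank_zero_right]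
    exact hrank i' j' hi' h1 hj' h2
  rw [key i j hin hjn, key (i-1) j (by omega) hjn, key i (j-1) hin (by omega),
      key (i-1) (j-1) (by omega) (by omega),
      llrank_eq_count Q hQ01 hQrow hQcol hin hjn,
      llrank_eq_count Q hQ01 hQrow hQcol (by omega : i - 1 ≤ n) hjn,
      llrank_eq_count Q hQ01 hQrow hQcol hin (by omega : j - 1 ≤ n),
      llrank_eq_count Q hQ01 hQrow hQcol (by omega : i - 1 ≤ n) (by omega : j - 1 ≤ n),
      llcount_ie Q hi1 hin hj1 hjn]
  rcases hQ01 ⟨n - i, by omega⟩ ⟨j - 1, by omega⟩ with h | h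
  · simp [h]
  · rw [h]
    simp [h]
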